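/- arXiv:1709.07329 — 3 statements merged into one kernel-verified Lean document; each statement's English description precedes it below -/
import Mathlib

section
/- Let ζ be a nonnegative random variable on a probability space (Ω, F, P). Then the map x ↦ e^{−xζ} from (0,∞) to L^∞(P) is analytic: for every y > 0 and every x with |x − y| < y, one has e^{−xζ} = Σ_{n≥0} A_n(y)(x−y)^n with A_n(y) = ((−1)^n/n!) ζ^n e^{−yζ} ∈ L^∞(P), the series converging in the L^∞ norm. -/
open MeasureTheory Filter Set
open scoped ENNReal NNReal Topology

noncomputable section

private lemma pow_div_factorial_le_exp {t : ℝ} (ht : 0 ≤ t) (n : ℕ) :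
    t ^ n / n.factorial ≤ Real.exp t := by
  calc t ^ n / n.factorial
      ≤ ∑ i ∈ Finset.range (n + 1), t ^ i / i.factorial :=
        Finset.single_le_sum (f := fun i => t ^ i / (i.factorial : ℝ))
          (fun i _ => by positivity) (Finset.self_mem_range_succ n)
    _ ≤ Real.exp t := Real.sum_le_exp_of_nonneg ht _

private lemma ae_norm_le_norm_top {Ω : Type*} {m : MeasurableSpace Ω} {P : Measure Ω}
    (f : Lp ℝ ∞ P) : ∀ᵐ ω ∂P, ‖(f : Ω → ℝ) ω‖ ≤ ‖f‖ := by
  have h := MeasureTheory.enorm_ae_le_eLpNormEssSup (f : Ω → ℝ) P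
  have hne : eLpNormEssSup (f : Ω → ℝ) P ≠ ∞ := by
    rw [← eLpNorm_exponent_top]; exact Lp.eLpNorm_ne_top f
  filter_upwards [h] with ω hω
  rw [Lp.norm_def, eLpNorm_exponent_top]
  calc ‖(f : Ω → ℝ) ω‖ = ((‖(f : Ω → ℝ) ω‖₊ : ℝ≥0∞)).toReal := by simp
    _ ≤ (eLpNormEssSup (f : Ω → ℝ) P).toReal := ENNReal.toReal_mono hne hω

private lemma Lp_coeFn_sum_range {Ω : Type*} {m : MeasurableSpace Ω} {P : Measure Ω}
    (f : ℕ → Lp ℝ ∞ P) (N : ℕ) :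
    ((∑ n ∈ Finset.range N, f n : Lp ℝ ∞ P) : Ω → ℝ) =ᵐ[P]
      fun ω => ∑ n ∈ Finset.range N, (f n : Ω → ℝ) ω := by
  induction N with
  | zero => simp; exact Lp.coeFn_zero (E := ℝ) (p := ∞) (μ := P)
  | succ N ih =>
    rw [Finset.sum_range_succ]
    filter_upwards [Lp.coeFn_add (∑ n ∈ Finset.range N, f n) (f N), ih] with ω h1 h2
    simp only [h1, Pi.add_apply, h2, Finset.sum_range_succ]

theorem exp_neg_mul_analytic_Linfty
    {Ω : Type*} {m : MeasurableSpace Ω} {P : Measure Ω} [IsProbabilityMeasure P]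
    (ζ : Ω → ℝ) (hζmeas : Measurable ζ) (hζnonneg : ∀ ω, 0 ≤ ζ ω)
    -- `g x` is the element `e^{-x ζ}` of `L^∞(P)` (for `x > 0`)
    (g : ℝ → Lp ℝ ∞ P)
    (hg : ∀ x : ℝ, 0 < x → (g x : Ω → ℝ) =ᵐ[P] fun ω => Real.exp (-x * ζ ω))
    -- `A y n` is the element `((-1)^n / n!) ζ^n e^{-y ζ}` of `L^∞(P)` (for `y > 0`)
    (A : ℝ → ℕ → Lp ℝ ∞ P)
    (hA : ∀ y : ℝ, 0 < y → ∀ n : ℕ, (A y n : Ω → ℝ) =ᵐ[P]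
      fun ω => ((-1 : ℝ) ^ n / n.factorial) * ζ ω ^ n * Real.exp (-y * ζ ω)) :
    -- the map `x ↦ e^{-xζ}` is analytic from `(0, ∞)` to `L^∞(P)`, and for every `y > 0` and
    -- every `x` with `|x - y| < y` the Taylor series `Σ_n A_n(y) (x-y)^n` converges to
    -- `e^{-xζ}` in the `L^∞` norm
    AnalyticOnNhd ℝ g (Ioi 0) ∧
      ∀ y : ℝ, 0 < y → ∀ x : ℝ, |x - y| < y →
        HasSum (fun n : ℕ => (x - y) ^ n • A y n) (g x) := by
  -- norm bound on the coefficients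
  have hbound : ∀ y : ℝ, 0 < y → ∀ n : ℕ, ‖A y n‖ ≤ y⁻¹ ^ n := by
    intro y hy n
    have hC : (0 : ℝ) ≤ y⁻¹ ^ n := by positivity
    have hae : ∀ᵐ ω ∂P, ‖(A y n : Ω → ℝ) ω‖ ≤ y⁻¹ ^ n := by
      filter_upwards [hA y hy n] with ω hω
      rw [hω]
      have ht : 0 ≤ y * ζ ω := mul_nonneg hy.le (hζnonneg ω)
      have key : (y * ζ ω) ^ n / n.factorial ≤ Real.exp (y * ζ ω) :=
        pow_div_factorial_le_exp ht n
      have h1 : (y * ζ ω) ^ n / n.factorial * Real.exp (-(y * ζ ω)) ≤ 1 := by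
        have := mul_le_mul_of_nonneg_right key (Real.exp_pos (-(y * ζ ω))).le
        rwa [← Real.exp_add, add_neg_cancel, Real.exp_zero] at this
      have hζn : ζ ω ^ n = (y * ζ ω) ^ n * y⁻¹ ^ n := by
        rw [mul_pow, inv_pow]; field_simp
      have hexp : Real.exp (-y * ζ ω) = Real.exp (-(y * ζ ω)) := by ring_nf
      rw [Real.norm_eq_abs, abs_mul, abs_mul, abs_div, abs_pow, abs_neg, abs_one, one_pow,
        abs_pow, abs_of_nonneg (hζnonneg ω), abs_of_pos (Real.exp_pos _),
        Nat.abs_cast, hexp, hζn]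
      calc 1 / (n.factorial : ℝ) * ((y * ζ ω) ^ n * y⁻¹ ^ n) * Real.exp (-(y * ζ ω))
          = ((y * ζ ω) ^ n / n.factorial * Real.exp (-(y * ζ ω))) * y⁻¹ ^ n := by ring
        _ ≤ 1 * y⁻¹ ^ n := mul_le_mul_of_nonneg_right h1 hC
        _ = y⁻¹ ^ n := one_mul _
    have := Lp.norm_le_of_ae_bound (f := A y n) hC hae
    simpa using this
  -- the HasSum part
  have hsum : ∀ y : ℝ, 0 < y → ∀ x : ℝ, |x - y| < y →
      HasSum (fun n : ℕ => (x - y) ^ n • A y n) (g x) := by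
    intro y hy x hxy
    have hx : 0 < x := by
      have := abs_lt.1 hxy; linarith [this.1]
    set r : ℝ := |x - y| / y with hr
    have hr1 : r < 1 := (div_lt_one hy).2 hxy
    have hr0 : 0 ≤ r := div_nonneg (abs_nonneg _) hy.le
    have hnorm : ∀ n : ℕ, ‖(x - y) ^ n • A y n‖ ≤ r ^ n := by
      intro n
      rw [norm_smul, norm_pow, Real.norm_eq_abs, hr, div_pow]
      calc |x - y| ^ n * ‖A y n‖ ≤ |x - y| ^ n * y⁻¹ ^ n :=
            mul_le_mul_of_nonneg_left (hbound y hy n) (by positivity)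
        _ = |x - y| ^ n / y ^ n := by rw [inv_pow, div_eq_mul_inv]
    have hsummable : Summable (fun n : ℕ => (x - y) ^ n • A y n) :=
      Summable.of_norm_bounded (summable_geometric_of_lt_one hr0 hr1) hnorm
    obtain ⟨S, hS⟩ := hsummable
    suffices h : S = g x by rwa [h] at hS
    -- partial sums
    set F : ℕ → Lp ℝ ∞ P := fun N => ∑ n ∈ Finset.range N, (x - y) ^ n • A y n with hF
    have hT : Tendsto F atTop (𝓝 S) := hS.tendsto_sum_nat
    have hTnorm : Tendsto (fun N => ‖S - F N‖) atTop (𝓝 0) := by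
      have := (tendsto_iff_norm_sub_tendsto_zero).1 hT
      simpa [norm_sub_rev] using this
    -- a.e. identification of the coefficients of partial sums
    have hFcoe : ∀ N : ℕ, (F N : Ω → ℝ) =ᵐ[P]
        fun ω => ∑ n ∈ Finset.range N,
          (x - y) ^ n * (((-1 : ℝ) ^ n / n.factorial) * ζ ω ^ n * Real.exp (-y * ζ ω)) := by
      intro N
      have h1 := Lp_coeFn_sum_range (fun n => (x - y) ^ n • A y n) N
      have h2 : ∀ᵐ ω ∂P, ∀ n : ℕ, (((x - y) ^ n • A y n : Lp ℝ ∞ P) : Ω → ℝ) ω =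
          (x - y) ^ n * (((-1 : ℝ) ^ n / n.factorial) * ζ ω ^ n * Real.exp (-y * ζ ω)) := by
        rw [ae_all_iff]
        intro n
        filter_upwards [Lp.coeFn_smul ((x - y) ^ n) (A y n), hA y hy n] with ω hs ha
        rw [hs]; simp [ha]
      filter_upwards [h1, h2] with ω hω1 hω2
      rw [hω1]
      exact Finset.sum_congr rfl fun n _ => hω2 n
    have hbnd : ∀ N : ℕ, ∀ᵐ ω ∂P, ‖((S - F N : Lp ℝ ∞ P) : Ω → ℝ) ω‖ ≤ ‖S - F N‖ :=
      fun N => ae_norm_le_norm_top (S - F N)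
    have hsub : ∀ N : ℕ, ∀ᵐ ω ∂P,
        ((S - F N : Lp ℝ ∞ P) : Ω → ℝ) ω = (S : Ω → ℝ) ω - (F N : Ω → ℝ) ω := by
      intro N
      filter_upwards [Lp.coeFn_sub S (F N)] with ω hω
      rw [hω, Pi.sub_apply]
    -- combine everything a.e.
    have hgx := hg x hx
    refine (Lp.ext ?_ : S = g x)
    have hall : ∀ᵐ ω ∂P, ∀ N : ℕ,
        ((F N : Ω → ℝ) ω = ∑ n ∈ Finset.range N,
          (x - y) ^ n * (((-1 : ℝ) ^ n / n.factorial) * ζ ω ^ n * Real.exp (-y * ζ ω))) ∧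
        |(S : Ω → ℝ) ω - (F N : Ω → ℝ) ω| ≤ ‖S - F N‖ := by
      rw [ae_all_iff]
      intro N
      filter_upwards [hFcoe N, hbnd N, hsub N] with ω h1 h2 h3
      refine ⟨h1, ?_⟩
      rw [← h3]; exact h2
    filter_upwards [hall, hgx] with ω hω hgω
    rw [hgω]
    -- pointwise: partial sums tend to exp(-x ζ ω)
    have hexp : HasSum
        (fun n : ℕ => (x - y) ^ n * (((-1 : ℝ) ^ n / n.factorial) * ζ ω ^ n
          * Real.exp (-y * ζ ω)))
        (Real.exp (-x * ζ ω)) := by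
      have h0 : HasSum (fun n : ℕ => (-(x - y) * ζ ω) ^ n / n.factorial)
          (Real.exp (-(x - y) * ζ ω)) := by
        rw [Real.exp_eq_exp_ℝ]
        exact NormedSpace.expSeries_div_hasSum_exp (-(x - y) * ζ ω)
      have h1 := h0.mul_right (Real.exp (-y * ζ ω))
      have heq : (fun n : ℕ => (-(x - y) * ζ ω) ^ n / n.factorial * Real.exp (-y * ζ ω)) =
          fun n : ℕ => (x - y) ^ n * (((-1 : ℝ) ^ n / n.factorial) * ζ ω ^ n
            * Real.exp (-y * ζ ω)) := by
        funext n
        rw [mul_pow, neg_pow]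
        ring
      rw [heq] at h1
      have : Real.exp (-(x - y) * ζ ω) * Real.exp (-y * ζ ω) = Real.exp (-x * ζ ω) := by
        rw [← Real.exp_add]; ring_nf
      rwa [this] at h1
    have hptend : Tendsto (fun N => (F N : Ω → ℝ) ω) atTop (𝓝 (Real.exp (-x * ζ ω))) := by
      have := hexp.tendsto_sum_nat
      refine this.congr fun N => ?_
      exact ((hω N).1).symm
    have hStend : Tendsto (fun N => (F N : Ω → ℝ) ω) atTop (𝓝 ((S : Ω → ℝ) ω)) := by
      rw [tendsto_iff_norm_sub_tendsto_zero]
      refine squeeze_zero (fun N => norm_nonneg _) (fun N => ?_) hTnorm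
      rw [Real.norm_eq_abs, abs_sub_comm]
      exact (hω N).2
    exact tendsto_nhds_unique hStend hptend
  refine ⟨?_, hsum⟩
  -- analyticity
  intro y hy
  rw [mem_Ioi] at hy
  set p : FormalMultilinearSeries ℝ ℝ (Lp ℝ ∞ P) :=
    fun n => ContinuousMultilinearMap.mkPiRing ℝ (Fin n) (A y n) with hp
  have hpn : ∀ n, ‖p n‖ = ‖A y n‖ := fun n => ContinuousMultilinearMap.norm_mkPiRing _
  have hrad : ENNReal.ofReal y ≤ p.radius := by
    have : (y.toNNReal : ℝ≥0∞) ≤ p.radius := by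
      apply p.le_radius_of_bound 1
      intro n
      rw [hpn]
      calc ‖A y n‖ * (y.toNNReal : ℝ) ^ n ≤ y⁻¹ ^ n * y ^ n := by
            rw [Real.coe_toNNReal _ hy.le]
            exact mul_le_mul_of_nonneg_right (hbound y hy n) (by positivity)
        _ = 1 := by rw [← mul_pow, inv_mul_cancel₀ hy.ne', one_pow]
    rwa [ENNReal.ofReal]
  refine ⟨p, ENNReal.ofReal y, ?_⟩
  refine ⟨hrad, ENNReal.ofReal_pos.2 hy, ?_⟩
  intro z hz
  have hz' : |z| < y := by
    rw [EMetric.mem_ball, edist_zero_right, ← ofReal_norm] at hz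
    rw [← Real.norm_eq_abs]
    exact (ENNReal.ofReal_lt_ofReal_iff_of_nonneg (norm_nonneg z)).1 hz
  have hx : |(y + z) - y| < y := by simpa using hz'
  have := hsum y hy (y + z) hx
  simp only [add_sub_cancel_left] at this
  refine this.congr_fun fun n => ?_
  simp [hp, ContinuousMultilinearMap.mkPiRing_apply]
end
end

section
/- Let U be an open connected set in ℝ^d and x ↦ σ(x) an analytic map from U into the space of real k×l matrices. Set m = sup_{y∈U} rank σ(y) and E = {x ∈ U : rank σ(x) < m}. Then there exists a real-analytic function f on U, not identically zero, such that E = {x ∈ U : f(x) = 0}. In particular, E has Lebesgue measure zero, and if d = 1 then E consists of isolated points of U. -/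
open MeasureTheory Filter Set
open scoped ENNReal NNReal Topology

attribute [local instance] Matrix.frobeniusNormedAddCommGroup Matrix.frobeniusNormedSpace

noncomputable section

open Matrix Submodule Module Topology

section Aux
-- submatrix as product
lemma submatrix_row_eq_mul {k l r : ℕ} (A : Matrix (Fin k) (Fin l) ℝ) (f : Fin r → Fin k) :
    A.submatrix f id = (1 : Matrix (Fin k) (Fin k) ℝ).submatrix f id * A := by
  ext i j
  simp [Matrix.mul_apply, Matrix.one_apply]

lemma submatrix_col_eq_mul {k l r : ℕ} (A : Matrix (Fin k) (Fin l) ℝ) (g : Fin r → Fin l) :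
    A.submatrix id g = A * (1 : Matrix (Fin l) (Fin l) ℝ).submatrix id g := by
  ext i j
  simp [Matrix.mul_apply, Matrix.one_apply]

lemma rank_submatrix_le' {k l r : ℕ} (A : Matrix (Fin k) (Fin l) ℝ) (f : Fin r → Fin k)
    (g : Fin r → Fin l) : (A.submatrix f g).rank ≤ A.rank := by
  have h1 : A.submatrix f g = (A.submatrix f id).submatrix id g := rfl
  calc (A.submatrix f g).rank
      ≤ (A.submatrix f id).rank := by
        rw [h1, submatrix_col_eq_mul]; exact Matrix.rank_mul_le_left _ _
    _ ≤ A.rank := by rw [submatrix_row_eq_mul]; exact Matrix.rank_mul_le_right _ _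

lemma le_rank_of_minor {k l r : ℕ} (A : Matrix (Fin k) (Fin l) ℝ) (f : Fin r → Fin k)
    (g : Fin r → Fin l) (h : (A.submatrix f g).det ≠ 0) : r ≤ A.rank := by
  have hu : IsUnit (A.submatrix f g) := (Matrix.isUnit_iff_isUnit_det _).mpr h.isUnit
  have := Matrix.rank_of_isUnit _ hu
  calc r = Fintype.card (Fin r) := (Fintype.card_fin r).symm
    _ = (A.submatrix f g).rank := by rw [this]
    _ ≤ A.rank := rank_submatrix_le' A f g


lemma extract_li {V : Type*} [AddCommGroup V] [Module ℝ V] {b r : ℕ} (v : Fin b → V)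
    (h : r ≤ finrank ℝ (span ℝ (range v))) :
    ∃ g : Fin r → Fin b, LinearIndependent ℝ (fun j => v (g j)) := by
  obtain ⟨s, hst, hsp, hli⟩ := exists_linearIndependent ℝ (range v)
  have hsf : s.Finite := (finite_range v).subset hst
  haveI := hsf.fintype
  have hcard : finrank ℝ (span ℝ s) = Fintype.card s := by
    conv_lhs => rw [← Subtype.range_coe (s := s)]
    exact finrank_span_eq_card hli
  rw [← hsp, hcard] at h
  obtain ⟨u⟩ : Nonempty (Fin r ↪ s) := by
    rw [Function.Embedding.nonempty_iff_card_le, Fintype.card_fin]; exact h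
  have hsel : ∀ a : Fin r, ∃ j : Fin b, v j = (u a : V) := fun a => hst (u a).2
  choose g hg using hsel
  refine ⟨g, ?_⟩
  have : (fun j => v (g j)) = (Subtype.val : s → V) ∘ u := funext fun a => hg a
  rw [this]
  exact hli.comp u u.injective

lemma exists_minor_ne_zero {k l r : ℕ} (A : Matrix (Fin k) (Fin l) ℝ) (h : r ≤ A.rank) :
    ∃ (f : Fin r → Fin k) (g : Fin r → Fin l), (A.submatrix f g).det ≠ 0 := by
  rw [Matrix.rank_eq_finrank_span_cols] at h
  obtain ⟨g, hg⟩ := extract_li Aᵀ h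
  set C := A.submatrix id g with hC
  have hCT : Cᵀ = fun j => Aᵀ (g j) := rfl
  have hrC : r ≤ Cᵀ.rank := by
    rw [Matrix.rank_transpose, Matrix.rank_eq_finrank_span_cols]
    change r ≤ finrank ℝ (span ℝ (range Cᵀ))
    rw [hCT]
    rw [finrank_span_eq_card hg, Fintype.card_fin]
  rw [Matrix.rank_eq_finrank_span_cols] at hrC
  obtain ⟨f, hf⟩ := extract_li Cᵀᵀ hrC
  refine ⟨f, g, ?_⟩
  have hrows : (fun a => (A.submatrix f g) a) = fun a => Cᵀᵀ (f a) := rfl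
  have hli : LinearIndependent ℝ (fun a => (A.submatrix f g) a) := hrows ▸ hf
  have hu : IsUnit (A.submatrix f g) := Matrix.linearIndependent_rows_iff_isUnit.mp hli
  exact ((Matrix.isUnit_iff_isUnit_det _).mp hu).ne_zero


lemma entry_analytic {d k l : ℕ} {U : Set (EuclideanSpace ℝ (Fin d))} (σ : EuclideanSpace ℝ (Fin d) → Matrix (Fin k) (Fin l) ℝ)
    (hσ : AnalyticOnNhd ℝ σ U) (i : Fin k) (j : Fin l) :
    AnalyticOnNhd ℝ (fun x => σ x i j) U := by
  let L : Matrix (Fin k) (Fin l) ℝ →ₗ[ℝ] ℝ :=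
    { toFun := fun M => M i j, map_add' := fun _ _ => rfl, map_smul' := fun _ _ => rfl }
  exact (LinearMap.toContinuousLinearMap L).comp_analyticOnNhd hσ

lemma minor_analytic {d k l : ℕ} {U : Set (EuclideanSpace ℝ (Fin d))} (σ : EuclideanSpace ℝ (Fin d) → Matrix (Fin k) (Fin l) ℝ)
    (hσ : AnalyticOnNhd ℝ σ U) {r : ℕ} (p : Fin r → Fin k) (q : Fin r → Fin l) :
    AnalyticOnNhd ℝ (fun x => ((σ x).submatrix p q).det) U := by
  have : (fun x => ((σ x).submatrix p q).det) =
      fun x => ∑ τ : Equiv.Perm (Fin r), ((Equiv.Perm.sign τ : ℤ) : ℝ) *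
        ∏ i : Fin r, σ x (p (τ i)) (q i) := by
    funext x; rw [Matrix.det_apply']; rfl
  rw [this]
  apply Finset.analyticOnNhd_fun_sum
  intro τ _
  exact analyticOnNhd_const.mul <| Finset.analyticOnNhd_fun_prod Finset.univ
    (fun i _ => entry_analytic σ hσ (p (τ i)) (q i))


lemma slice_null {n : ℕ} (i : Fin (n + 1)) (A : Set (EuclideanSpace ℝ (Fin (n + 1))))
    (hA : MeasurableSet A)
    (hsub : ∀ z : EuclideanSpace ℝ (Fin (n + 1)),
      Set.Subsingleton {t : ℝ | z + t • (EuclideanSpace.single i (1:ℝ)) ∈ A}) :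
    volume A = 0 := by
  set ψ := (MeasurableEquiv.toLp 2 (Fin (n + 1) → ℝ)).symm with hψ
  set χ := MeasurableEquiv.piFinSuccAbove (fun _ : Fin (n + 1) => ℝ) i with hχ
  set Θ := ψ.trans χ with hΘ
  have mp1 : MeasurePreserving ψ volume volume :=
    EuclideanSpace.volume_preserving_symm_measurableEquiv_toLp (Fin (n + 1))
  have mp2 : MeasurePreserving χ volume volume := by
    have := measurePreserving_piFinSuccAbove (fun _ : Fin (n + 1) => (volume : Measure ℝ)) i
    rw [MeasureTheory.volume_pi, Measure.volume_eq_prod, MeasureTheory.volume_pi]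
    exact this
  have mp : MeasurePreserving Θ volume volume := by
    rw [hΘ]
    exact mp2.comp mp1
  set s : Set (ℝ × (Fin n → ℝ)) := Θ '' A with hs
  have hsm : MeasurableSet s := Θ.measurableSet_image.mpr hA
  have hApre : A = Θ ⁻¹' s := by
    rw [hs, Θ.preimage_image]
  have h1 : volume A = volume s := by
    rw [hApre]; exact mp.measure_preimage hsm.nullMeasurableSet
  rw [h1]
  -- swap
  set s' : Set ((Fin n → ℝ) × ℝ) := Prod.swap ⁻¹' s with hs'
  have hs'm : MeasurableSet s' := measurable_swap hsm
  have h2 : (volume : Measure (ℝ × (Fin n → ℝ))) s = (volume : Measure ((Fin n → ℝ) × ℝ)) s' := by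
    rw [Measure.volume_eq_prod, Measure.volume_eq_prod]
    conv_rhs => rw [← Measure.prod_swap]
    rw [Measure.map_apply measurable_swap hs'm]
    have hss : Prod.swap ⁻¹' s' = s := by rw [hs']; ext p; simp
    rw [hss]
  rw [h2, Measure.volume_eq_prod, Measure.measure_prod_null hs'm]
  -- show all slices are null
  refine Filter.Eventually.of_forall (fun x => ?_)
  show volume (Prod.mk x ⁻¹' s') = 0
  have key : Prod.mk x ⁻¹' s' = {t : ℝ | Θ.symm (t, x) ∈ A} := by
    ext t
    simp only [hs', hs, mem_preimage, Prod.swap, mem_setOf_eq]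
    constructor
    · rintro ⟨a, ha, hEq⟩
      have : a = Θ.symm (t, x) := by rw [← hEq, MeasurableEquiv.symm_apply_apply]
      rwa [← this]
    · intro h
      exact ⟨Θ.symm (t, x), h, by simp⟩
  rw [key]
  have hline : ∀ t : ℝ, Θ.symm (t, x) =
      Θ.symm (0, x) + t • (EuclideanSpace.single i (1:ℝ)) := by
    intro t
    have hcoord : ∀ (a : ℝ) (j : Fin (n + 1)),
        (Θ.symm (a, x)) j = Fin.insertNth (α := fun _ => ℝ) i a x j := by
      intro a j
      rfl
    refine PiLp.ext fun j => ?_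
    have h1 := hcoord t j
    have h2 := hcoord 0 j
    have hadd : (Θ.symm (0, x) + t • (EuclideanSpace.single i (1:ℝ))) j
        = (Θ.symm (0, x)) j + t * (EuclideanSpace.single i (1:ℝ)) j := rfl
    rw [h1, hadd, h2]
    rcases eq_or_ne j i with rfl | hji
    · simp [Fin.insertNth_apply_same, EuclideanSpace.single_apply]
    · obtain ⟨j', rfl⟩ := Fin.exists_succAbove_eq (by exact hji)
      simp [Fin.insertNth_apply_succAbove, EuclideanSpace.single_apply,
        (Fin.succAbove_ne i j')]
  have : {t : ℝ | Θ.symm (t, x) ∈ A} =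
      {t : ℝ | Θ.symm (0, x) + t • (EuclideanSpace.single i (1:ℝ)) ∈ A} := by
    ext t; rw [mem_setOf_eq, hline t]; rfl
  rw [this]
  exact (hsub _).measure_zero _


lemma regular_zero_null {n : ℕ} {U : Set (EuclideanSpace ℝ (Fin (n + 1)))} (hU : IsOpen U)
    {g : EuclideanSpace ℝ (Fin (n + 1)) → ℝ} (hg : AnalyticOnNhd ℝ g U) (i : Fin (n + 1)) :
    volume {y | y ∈ U ∧ g y = 0 ∧
      fderiv ℝ g y (EuclideanSpace.single i (1:ℝ)) ≠ 0} = 0 := by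
  set e : EuclideanSpace ℝ (Fin (n + 1)) := EuclideanSpace.single i (1:ℝ) with he
  set pg : EuclideanSpace ℝ (Fin (n + 1)) → ℝ := fun y => fderiv ℝ g y e with hpgdef
  have hpga : AnalyticOnNhd ℝ pg U := by
    have h1 : AnalyticOnNhd ℝ (fderiv ℝ g) U := hg.fderiv
    exact (ContinuousLinearMap.apply ℝ ℝ e).comp_analyticOnNhd h1
  set S := {y | y ∈ U ∧ g y = 0 ∧ pg y ≠ 0} with hS
  apply measure_null_of_locally_null
  intro x hx
  obtain ⟨hxU, hgx, hpgx⟩ := hx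
  have hcont : ContinuousAt pg x := hpga.continuousOn.continuousAt (hU.mem_nhds hxU)
  have hnhds : {y | y ∈ U ∧ pg y ≠ 0} ∈ 𝓝 x :=
    Filter.inter_mem (hU.mem_nhds hxU) (hcont.eventually_ne hpgx)
  obtain ⟨ε, hε, hball⟩ := Metric.mem_nhds_iff.mp hnhds
  set A := {y | y ∈ Metric.ball x ε ∧ g y = 0} with hA
  refine ⟨S ∩ Metric.ball x ε,
    inter_mem_nhdsWithin _ (Metric.ball_mem_nhds x hε), ?_⟩
  have hSA : S ∩ Metric.ball x ε ⊆ A := fun y hy => ⟨hy.2, hy.1.2.1⟩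
  refine measure_mono_null hSA ?_
  -- prerequisites
  have hballU : Metric.ball x ε ⊆ U := fun y hy => (hball hy).1
  have hpgball : ∀ y ∈ Metric.ball x ε, pg y ≠ 0 := fun y hy => (hball hy).2
  -- A is measurable
  have hAeq : A = Metric.ball x ε ∩ closure A := by
    apply Subset.antisymm
    · exact fun y hy => ⟨hy.1, subset_closure hy⟩
    · rintro y ⟨hyb, hyc⟩
      refine ⟨hyb, ?_⟩
      haveI : (𝓝[A] y).NeBot := mem_closure_iff_nhdsWithin_neBot.mp hyc
      have hgc : ContinuousAt g y := hg.continuousOn.continuousAt (hU.mem_nhds (hballU hyb))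
      have h1 : Filter.Tendsto g (𝓝[A] y) (𝓝 (g y)) :=
        hgc.continuousWithinAt.tendsto
      have h2 : Filter.Tendsto g (𝓝[A] y) (𝓝 0) := by
        apply Filter.Tendsto.congr' _ tendsto_const_nhds
        filter_upwards [self_mem_nhdsWithin] with a ha
        exact ha.2.symm
      exact tendsto_nhds_unique h1 h2
  have hAm : MeasurableSet A := by
    rw [hAeq]
    exact Metric.isOpen_ball.measurableSet.inter isClosed_closure.measurableSet
  -- slices are subsingletons
  apply slice_null i A hAm
  intro z
  have key : ∀ a b : ℝ, a ∈ {t : ℝ | z + t • e ∈ A} → b ∈ {t : ℝ | z + t • e ∈ A} →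
      a < b → False := by
    intro a b ha hb hab
    set L : ℝ → EuclideanSpace ℝ (Fin (n + 1)) := fun t => z + t • e with hL
    set K := {t : ℝ | L t ∈ Metric.ball x ε} with hK
    have hKconv : Convex ℝ K := by
      have h1 : K = (AffineMap.lineMap z (z + e)) ⁻¹' (Metric.ball x ε) := by
        ext t
        simp [hK, hL, AffineMap.lineMap_apply, add_comm]
      rw [h1]
      exact (convex_ball x ε).affine_preimage _
    have hIccK : Icc a b ⊆ K := hKconv.ordConnected.out ha.1 hb.1
    have hderiv : ∀ t ∈ K, HasDerivAt (fun t => g (L t)) (pg (L t)) t := by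
      intro t ht
      have hLd : HasDerivAt L e t := by
        have := ((hasDerivAt_id t).smul_const e).const_add z
        rw [one_smul] at this
        exact this
      have hgd : HasFDerivAt g (fderiv ℝ g (L t)) (L t) :=
        (hg (L t) (hballU ht)).differentiableAt.hasFDerivAt
      exact hgd.comp_hasDerivAt t hLd
    have hcontIcc : ContinuousOn (fun t => g (L t)) (Icc a b) := fun t ht =>
      ((hderiv t (hIccK ht)).continuousAt).continuousWithinAt
    have heq : g (L a) = g (L b) := by rw [ha.2, hb.2]
    obtain ⟨c, hc, hc0⟩ := exists_hasDerivAt_eq_zero hab hcontIcc heq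
      (fun t ht => hderiv t (hIccK (Ioo_subset_Icc_self ht)))
    exact hpgball (L c) (hIccK (Ioo_subset_Icc_self hc)) hc0
  intro a ha b hb
  rcases lt_trichotomy a b with h | h | h
  · exact absurd (key a b ha hb h) (not_false)
  · exact h
  · exact absurd (key b a hb ha h) (not_false)


lemma analytic_zero_set_null {d : ℕ} {U : Set (EuclideanSpace ℝ (Fin d))} (hUo : IsOpen U)
    (hUc : IsPreconnected U) {f : EuclideanSpace ℝ (Fin d) → ℝ} (hf : AnalyticOnNhd ℝ f U)
    {x0 : EuclideanSpace ℝ (Fin d)} (hx0 : x0 ∈ U) (hfx0 : f x0 ≠ 0) :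
    volume {x | x ∈ U ∧ f x = 0} = 0 := by
  classical
  -- no point of U is a point of local vanishing
  have hev : ∀ x ∈ U, ¬ (∀ᶠ y in 𝓝 x, f y = 0) := by
    intro x hx h
    exact hfx0 (hf.eqOn_zero_of_preconnected_of_eventuallyEq_zero hUc hx h hx0)
  -- at each zero, some iterated derivative is nonzero
  have hstep2 : ∀ x ∈ U, f x = 0 → ∃ N, iteratedFDeriv ℝ N f x ≠ 0 := by
    intro x hx hfx
    by_contra hall
    push_neg at hall
    apply hev x hx
    obtain ⟨p, hp⟩ := hf x hx
    obtain ⟨r, hpb⟩ := hp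
    have hterm : ∀ (y : EuclideanSpace ℝ (Fin d)) (N : ℕ), (p N fun _ => y) = 0 := by
      intro y N
      have h1 := hpb.factorial_smul y N
      rw [hall N] at h1
      simp only [ContinuousMultilinearMap.zero_apply] at h1
      have hfac : ((Nat.factorial N : ℕ) : ℝ) ≠ 0 := Nat.cast_ne_zero.mpr (Nat.factorial_ne_zero N)
      have := h1
      rw [nsmul_eq_mul] at this
      exact (mul_eq_zero.mp this).resolve_left hfac
    have hev0 : ∀ᶠ y in 𝓝 (0 : EuclideanSpace ℝ (Fin d)), f (x + y) = 0 := by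
      filter_upwards [hpb.hasFPowerSeriesAt.eventually_hasSum] with y hy
      have : HasSum (fun N => p N fun _ => y) 0 := by
        simpa [hterm y] using hasSum_zero
      exact (hy.unique this)
    have htend : Tendsto (fun y => y - x) (𝓝 x) (𝓝 (0 : EuclideanSpace ℝ (Fin d))) := by
      have : Tendsto (fun y => y - x) (𝓝 x) (𝓝 (x - x)) :=
        (continuous_id.sub continuous_const).tendsto x
      simpa using this
    filter_upwards [htend.eventually hev0] with y hy
    simpa using hy
  cases d with
  | zero =>
    haveI : Subsingleton (EuclideanSpace ℝ (Fin 0)) :=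
      ⟨fun a b => PiLp.ext fun j => Fin.elim0 j⟩
    have : {x | x ∈ U ∧ f x = 0} = ∅ := by
      ext x
      simp only [mem_setOf_eq, mem_empty_iff_false, iff_false, not_and]
      intro hxU
      rw [Subsingleton.elim x x0]
      exact hfx0
    rw [this]; exact measure_empty
  | succ n =>
    set bas : Fin (n + 1) → EuclideanSpace ℝ (Fin (n + 1)) :=
      fun j => EuclideanSpace.single j (1:ℝ) with hbas
    set G : (m : ℕ) → (Fin m → Fin (n + 1)) → EuclideanSpace ℝ (Fin (n + 1)) → ℝ :=
      fun m w' y => iteratedFDeriv ℝ m f y (fun j => bas (w' j)) with hG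
    have hGan : ∀ (m : ℕ) (w' : Fin m → Fin (n + 1)), AnalyticOnNhd ℝ (G m w') U := by
      intro m w'
      exact (ContinuousMultilinearMap.apply ℝ (fun _ : Fin m => EuclideanSpace ℝ (Fin (n + 1))) ℝ
        (fun j => bas (w' j))).comp_analyticOnNhd (hf.iteratedFDeriv m)
    set S : (m : ℕ) → (Fin (m + 1) → Fin (n + 1)) → Set (EuclideanSpace ℝ (Fin (n + 1))) :=
      fun m w => {y | y ∈ U ∧ G m (Fin.tail w) y = 0 ∧
        fderiv ℝ (G m (Fin.tail w)) y (EuclideanSpace.single (w 0) (1:ℝ)) ≠ 0} with hSdef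
    have hcover : {x | x ∈ U ∧ f x = 0} ⊆
        ⋃ (m : ℕ) (w : Fin (m + 1) → Fin (n + 1)), S m w := by
      rintro x ⟨hxU, hfx⟩
      obtain ⟨N, hN⟩ := hstep2 x hxU hfx
      have hP : ∃ N, iteratedFDeriv ℝ N f x ≠ 0 := ⟨N, hN⟩
      set N₀ := Nat.find hP with hN₀def
      have hN₀ : iteratedFDeriv ℝ N₀ f x ≠ 0 := Nat.find_spec hP
      have hN₀pos : N₀ ≠ 0 := by
        intro h0
        apply hN₀
        rw [h0]
        ext v
        simp [iteratedFDeriv_zero_apply, hfx]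
      obtain ⟨m, hm⟩ : ∃ m, N₀ = m + 1 := ⟨N₀ - 1, (Nat.succ_pred_eq_of_pos (Nat.pos_of_ne_zero hN₀pos)).symm⟩
      have hprev : iteratedFDeriv ℝ m f x = 0 := by
        by_contra hc
        have hle : N₀ ≤ m := Nat.find_le hc
        omega
      rw [hm] at hN₀
      -- find basis tuple where the (m+1)-derivative is nonzero
      have hw : ∃ w : Fin (m + 1) → Fin (n + 1),
          iteratedFDeriv ℝ (m + 1) f x (fun j => bas (w j)) ≠ 0 := by
        by_contra hallw
        push_neg at hallw
        apply hN₀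
        have hbeq : (iteratedFDeriv ℝ (m + 1) f x).toMultilinearMap =
            (0 : ContinuousMultilinearMap ℝ (fun _ : Fin (m+1) => EuclideanSpace ℝ (Fin (n + 1))) ℝ).toMultilinearMap := by
          apply Basis.ext_multilinear (fun _ => (EuclideanSpace.basisFun (Fin (n+1)) ℝ).toBasis)
          intro v
          beta_reduce
          have : (fun i => (EuclideanSpace.basisFun (Fin (n+1)) ℝ).toBasis (v i)) =
              fun i => bas (v i) := by
            funext i
            rw [OrthonormalBasis.coe_toBasis, EuclideanSpace.basisFun_apply]
          rw [this]
          simpa using hallw v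
        ext v
        have := congrFun (congrArg (fun (M : MultilinearMap ℝ (fun _ : Fin (m+1) => EuclideanSpace ℝ (Fin (n + 1))) ℝ)
          => M.toFun) hbeq) v
        simpa using this
      obtain ⟨w, hwne⟩ := hw
      refine mem_iUnion.mpr ⟨m, mem_iUnion.mpr ⟨w, hxU, ?_, ?_⟩⟩
      · show G m (Fin.tail w) x = 0
        rw [hG]
        simp only [hprev, ContinuousMultilinearMap.zero_apply]
      · -- fderiv of G equals the (m+1)-st derivative applied
        have hdiff : DifferentiableAt ℝ (iteratedFDeriv ℝ m f) x :=
          ((hf.iteratedFDeriv m) x hxU).differentiableAt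
        set v : Fin m → EuclideanSpace ℝ (Fin (n + 1)) := fun j => bas (Fin.tail w j) with hv
        have hGder : HasFDerivAt (G m (Fin.tail w))
            ((ContinuousMultilinearMap.apply ℝ (fun _ : Fin m => EuclideanSpace ℝ (Fin (n + 1))) ℝ v).comp
              (fderiv ℝ (iteratedFDeriv ℝ m f) x)) x :=
          (ContinuousMultilinearMap.apply ℝ (fun _ : Fin m => EuclideanSpace ℝ (Fin (n + 1))) ℝ v).hasFDerivAt.comp x
            hdiff.hasFDerivAt
        have hfd : fderiv ℝ (G m (Fin.tail w)) x (EuclideanSpace.single (w 0) (1:ℝ)) =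
            fderiv ℝ (iteratedFDeriv ℝ m f) x (bas (w 0)) v := by
          rw [hGder.fderiv]
          rfl
        rw [hfd]
        have hleft := iteratedFDeriv_succ_apply_left (𝕜 := ℝ) (f := f) (x := x) (n := m)
          (fun j => bas (w j))
        have hv2 : (Fin.tail fun j => bas (w j)) = v := rfl
        rw [hv2] at hleft
        rw [← hleft]
        exact hwne
    refine measure_mono_null hcover ?_
    refine measure_iUnion_null fun m => measure_iUnion_null fun w => ?_
    exact regular_zero_null hUo (hGan m (Fin.tail w)) (w 0)


lemma isolated_part {U : Set (EuclideanSpace ℝ (Fin 1))} (hUo : IsOpen U)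
    (hUc : IsPreconnected U) {f : EuclideanSpace ℝ (Fin 1) → ℝ}
    (hf : AnalyticOnNhd ℝ f U) {x0 : EuclideanSpace ℝ (Fin 1)} (hx0 : x0 ∈ U)
    (hfx0 : f x0 ≠ 0) {E : Set (EuclideanSpace ℝ (Fin 1))}
    (hEsub : E ⊆ {x | x ∈ U ∧ f x = 0}) {x : EuclideanSpace ℝ (Fin 1)} (hx : x ∈ E) :
    𝓝[E \ {x}] x = ⊥ := by
  set κ : EuclideanSpace ℝ (Fin 1) ≃L[ℝ] ℝ :=
    (PiLp.continuousLinearEquiv 2 ℝ (fun _ : Fin 1 => ℝ)).trans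
      (ContinuousLinearEquiv.funUnique (Fin 1) ℝ ℝ) with hκ
  set h : ℝ → ℝ := f ∘ κ.symm with hh
  set V : Set ℝ := ⇑κ.symm ⁻¹' U with hV
  have hha : AnalyticOnNhd ℝ h V := by
    refine AnalyticOnNhd.comp hf ?_ ?_
    · exact (κ.symm : ℝ →L[ℝ] EuclideanSpace ℝ (Fin 1)).analyticOnNhd V
    · intro t ht; exact ht
  have hxU : x ∈ U := (hEsub hx).1
  have ht₀ : κ x ∈ V := by
    simp only [hV, mem_preimage, ContinuousLinearEquiv.symm_apply_apply]
    exact hxU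
  rcases (hha (κ x) ht₀).eventually_eq_zero_or_eventually_ne_zero with hcase | hcase
  · exfalso
    have hev : ∀ᶠ y in 𝓝 x, f y = 0 := by
      have htd : Tendsto (⇑κ) (𝓝 x) (𝓝 (κ x)) := κ.continuousAt.tendsto
      filter_upwards [htd.eventually hcase] with y hy
      simpa [hh] using hy
    exact hfx0 (hf.eqOn_zero_of_preconnected_of_eventuallyEq_zero hUc hxU hev hx0)
  · have hmap : Filter.map (⇑κ) (𝓝[≠] x) = 𝓝[≠] (κ x) := by
      have := (κ.toHomeomorph).map_punctured_nhds_eq x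
      simpa using this
    have hcase' : ∀ᶠ y in 𝓝[≠] x, f y ≠ 0 := by
      rw [← hmap, Filter.eventually_map] at hcase
      filter_upwards [hcase] with y hy
      simpa [hh] using hy
    have h1 : 𝓝[E \ {x}] x ≤ 𝓝[≠] x := nhdsWithin_mono x (fun y hy => hy.2)
    have h2 : {y | f y ≠ 0} ∈ 𝓝[E \ {x}] x := h1 hcase'
    have h3 : E \ {x} ∈ 𝓝[E \ {x}] x := self_mem_nhdsWithin
    have h4 : (∅ : Set (EuclideanSpace ℝ (Fin 1))) ∈ 𝓝[E \ {x}] x := by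
      have h5 := Filter.inter_mem h2 h3
      have h6 : {y | f y ≠ 0} ∩ (E \ {x}) = ∅ := by
        ext y
        simp only [mem_inter_iff, mem_setOf_eq, mem_diff, mem_empty_iff_false, iff_false]
        rintro ⟨hy1, hy2, _⟩
        exact hy1 (hEsub hy2).2
      rwa [h6] at h5
    exact Filter.empty_mem_iff_bot.mp h4

lemma nat_sup_attained {α : Type*} [Nonempty α] {U : Set α} (hU : U.Nonempty)
    (r : α → ℕ) (k : ℕ) (hb : ∀ y, r y ≤ k) :
    (∀ x ∈ U, r x ≤ ⨆ y ∈ U, r y) ∧ ∃ y ∈ U, r y = ⨆ y ∈ U, r y := by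
  have hinner : ∀ y : α, (⨆ _ : y ∈ U, r y) ≤ k := fun y => ciSup_le' fun _ => hb y
  have houter : BddAbove (Set.range fun y => ⨆ _ : y ∈ U, r y) := by
    refine ⟨k, ?_⟩
    rintro a ⟨y, rfl⟩
    exact hinner y
  have le1 : ∀ x ∈ U, r x ≤ ⨆ y ∈ U, r y := by
    intro x hxU
    have h1 : r x ≤ ⨆ _ : x ∈ U, r x := le_ciSup (f := fun _ : x ∈ U => r x)
      ⟨r x, by rintro a ⟨_, rfl⟩; exact le_rfl⟩ hxU
    exact h1.trans (le_ciSup houter x)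
  refine ⟨le1, ?_⟩
  have hT : sSup (r '' U) ∈ r '' U := Nat.sSup_mem (hU.image r)
    ⟨k, by rintro a ⟨y, _, rfl⟩; exact hb y⟩
  obtain ⟨y, hyU, hry⟩ := hT
  refine ⟨y, hyU, ?_⟩
  rw [hry]
  apply le_antisymm
  · apply csSup_le (hU.image r)
    rintro a ⟨z, hzU, rfl⟩
    exact le1 z hzU
  · refine ciSup_le' fun z => ciSup_le' fun hz => ?_
    exact le_csSup ⟨k, by rintro a ⟨y', _, rfl⟩; exact hb y'⟩ (mem_image_of_mem r hz)

end Aux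

theorem analytic_matrix_field_rank_degeneracy
    {d k l : ℕ}
    (U : Set (EuclideanSpace ℝ (Fin d))) (hUopen : IsOpen U) (hUconn : IsConnected U)
    (σ : EuclideanSpace ℝ (Fin d) → Matrix (Fin k) (Fin l) ℝ)
    (hσ : AnalyticOnNhd ℝ σ U)
    -- `mr = sup_{y ∈ U} rank σ(y)` and `E = {x ∈ U : rank σ(x) < mr}`
    (mr : ℕ) (hmr : mr = ⨆ y ∈ U, (σ y).rank)
    (E : Set (EuclideanSpace ℝ (Fin d))) (hE : E = {x ∈ U | (σ x).rank < mr}) :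
    -- there is a real-analytic function `f` on `U`, not identically zero, whose zero set
    -- in `U` is exactly `E`
    (∃ f : EuclideanSpace ℝ (Fin d) → ℝ,
      AnalyticOnNhd ℝ f U ∧ (∃ x ∈ U, f x ≠ 0) ∧ E = {x ∈ U | f x = 0}) ∧
    -- in particular, `E` has Lebesgue measure zero
    volume E = 0 ∧
    -- and if `d = 1` then `E` consists of isolated points
    (d = 1 → ∀ x ∈ E, 𝓝[E \ {x}] x = ⊥) := by
  classical
  have hUc : IsPreconnected U := hUconn.isPreconnected
  have hb : ∀ y, (σ y).rank ≤ l := fun y => by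
    simpa using Matrix.rank_le_card_width (σ y)
  obtain ⟨hle, y0, hy0U, hy0⟩ :=
    nat_sup_attained hUconn.nonempty (fun y => (σ y).rank) l hb
  set F : EuclideanSpace ℝ (Fin d) → ℝ :=
    fun x => ∑ pq : (Fin mr → Fin k) × (Fin mr → Fin l),
      ((σ x).submatrix pq.1 pq.2).det ^ 2 with hF
  have hFan : AnalyticOnNhd ℝ F U := by
    apply Finset.analyticOnNhd_fun_sum
    intro pq _
    have h1 := minor_analytic σ hσ pq.1 pq.2
    have h2 : (fun x => ((σ x).submatrix pq.1 pq.2).det ^ 2) =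
        fun x => ((σ x).submatrix pq.1 pq.2).det * ((σ x).submatrix pq.1 pq.2).det := by
      funext x; ring
    rw [h2]
    exact h1.mul h1
  have hFzero : ∀ x, (F x = 0 ↔
      ∀ (p : Fin mr → Fin k) (q : Fin mr → Fin l), ((σ x).submatrix p q).det = 0) := by
    intro x
    rw [hF]
    rw [Finset.sum_eq_zero_iff_of_nonneg (fun pq _ => sq_nonneg _)]
    constructor
    · intro hall p q
      have := hall (p, q) (Finset.mem_univ _)
      exact (pow_eq_zero_iff two_ne_zero).mp this
    · intro hall pq _
      rw [hall pq.1 pq.2]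
      ring
  have hiff : ∀ x, (F x = 0 ↔ ¬ (mr ≤ (σ x).rank)) := by
    intro x
    rw [hFzero x]
    constructor
    · intro hall hle'
      obtain ⟨p, q, hpq⟩ := exists_minor_ne_zero (σ x) hle'
      exact hpq (hall p q)
    · intro hnot p q
      by_contra hne
      exact hnot (le_rank_of_minor (σ x) p q hne)
  have hEeq : E = {x ∈ U | F x = 0} := by
    rw [hE]
    ext x
    simp only [mem_setOf_eq]
    constructor
    · rintro ⟨hxU, hlt⟩
      exact ⟨hxU, (hiff x).mpr (not_le.mpr hlt)⟩
    · rintro ⟨hxU, hFx⟩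
      exact ⟨hxU, not_le.mp ((hiff x).mp hFx)⟩
  have hFy0 : F y0 ≠ 0 := by
    intro hc
    apply (hiff y0).mp hc
    rw [hmr, ← hy0]
  have hEset : E = {x | x ∈ U ∧ F x = 0} := hEeq
  refine ⟨⟨F, hFan, ⟨y0, hy0U, hFy0⟩, hEeq⟩, ?_, ?_⟩
  · rw [hEset]
    exact analytic_zero_set_null hUopen hUc hFan hy0U hFy0
  · intro hd x hxE
    subst hd
    refine isolated_part hUopen hUc hFan hy0U hFy0 ?_ hxE
    rw [← hEset]
end
end

section
/- Let (ε_n)_{n≥1} be an i.i.d. sequence with P(ε_n = 1) = P(ε_n = −1) = 1/2, let F_0 be the trivial σ-algebra and F_n = σ(ε_1, …, ε_n). Let (x_n)_{n≥1} be a sequence in ℝ, let x ∈ ℝ with x ∉ {x_n : n ≥ 1}, and define the bounded martingale M_n(x) = Σ_{k=1}^n ((x − x_k)/(2^k(1+|x_k|))) ε_k. Then every martingale (N_n)_{n≥0} with respect to (F_n) admits a representation as a discrete stochastic integral of M(x): there exist random variables γ_k, k ≥ 1, with γ_k measurable with respect to F_{k−1}, such that N_n = N_0 + Σ_{k=1}^n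 γ_k (M_k(x) − M_{k−1}(x)) almost surely for every n ≥ 0. -/
open MeasureTheory Filter Set
open scoped ENNReal NNReal
open ProbabilityTheory

noncomputable section

lemma indep_mono' {Ω : Type*} {m : MeasurableSpace Ω} {m₁ m₂ m₁' m₂' : MeasurableSpace Ω}
    {μ : @Measure Ω m}
    (h : @Indep Ω m₁ m₂ m μ) (h₁ : m₁' ≤ m₁) (h₂ : m₂' ≤ m₂) : @Indep Ω m₁' m₂' m μ := by
  rw [Indep_iff] at h ⊢
  exact fun t1 t2 ht1 ht2 => h t1 t2 (h₁ _ ht1) (h₂ _ ht2)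

lemma key_rep {Ω : Type*} {m : MeasurableSpace Ω} {P : Measure Ω} [IsProbabilityMeasure P]
    (ε : ℕ → Ω → ℝ) (hεmeas : ∀ n, Measurable (ε n))
    (hεindep : iIndepFun ε P)
    (G : ℕ → MeasurableSpace Ω)
    (hG : ∀ n, G n = ⨆ k ∈ Finset.Icc 1 n, MeasurableSpace.comap (ε k) inferInstance)
    (hGle : ∀ n, G n ≤ m)
    (k : ℕ) (hk : 1 ≤ k)
    (h1 : P {ω | ε k ω = 1} = 1 / 2) (h2 : P {ω | ε k ω = -1} = 1 / 2)
    (D : Ω → ℝ) (hD : StronglyMeasurable[G k] D) (hDint : Integrable D P)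
    (hD0 : P[D | G (k-1)] =ᵐ[P] 0) :
    (fun ω => (P[fun ω' => D ω' * ε k ω' | G (k-1)]) ω * ε k ω) =ᵐ[P] D := by
  have hm' : G (k-1) ≤ m := hGle _
  have hmk : G k ≤ m := hGle _
  have hm'k : G (k-1) ≤ G k := by
    rw [hG, hG]
    exact biSup_mono (fun i hi => by simp only [Finset.mem_Icc] at *; omega)
  set S1 : Set Ω := ε k ⁻¹' {1} with hS1def
  set S2 : Set Ω := ε k ⁻¹' {-1} with hS2def
  have hS1 : MeasurableSet[MeasurableSpace.comap (ε k) inferInstance] S1 :=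
    ⟨{1}, measurableSet_singleton _, rfl⟩
  have hS2 : MeasurableSet[MeasurableSpace.comap (ε k) inferInstance] S2 :=
    ⟨{-1}, measurableSet_singleton _, rfl⟩
  have hcomap_le : MeasurableSpace.comap (ε k) inferInstance ≤ G k := by
    rw [hG]
    exact le_iSup₂ (f := fun i (_ : i ∈ Finset.Icc 1 k) =>
      MeasurableSpace.comap (ε i) inferInstance) k (Finset.mem_Icc.mpr ⟨hk, le_rfl⟩)
  have hS1m : MeasurableSet S1 := hmk _ (hcomap_le _ hS1)
  have hS2m : MeasurableSet S2 := hmk _ (hcomap_le _ hS2)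
  have hP1 : P S1 = 1/2 := by
    rw [← h1]; rfl
  have hP2 : P S2 = 1/2 := by
    rw [← h2]; rfl
  have hdisj : Disjoint S1 S2 := by
    rw [Set.disjoint_left]
    intro ω hω1 hω2
    simp only [hS1def, hS2def, Set.mem_preimage, Set.mem_singleton_iff] at hω1 hω2
    norm_num [hω1] at hω2
  have hae : ∀ᵐ ω ∂P, ε k ω = 1 ∨ ε k ω = -1 := by
    have hc : P (S1 ∪ S2)ᶜ = 0 := by
      rw [measure_compl (hS1m.union hS2m) (measure_ne_top _ _),
        measure_union hdisj hS2m, hP1, hP2, measure_univ]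
      rw [ENNReal.div_add_div_same, one_add_one_eq_two,
        ENNReal.div_self two_ne_zero ENNReal.ofNat_ne_top, tsub_self]
    rw [ae_iff]
    have hset : {ω | ¬(ε k ω = 1 ∨ ε k ω = -1)} = (S1 ∪ S2)ᶜ := by
      ext ω; simp [hS1def, hS2def, not_or]
    rw [hset]; exact hc
  -- independence
  have hindep : Indep (G (k-1)) (MeasurableSpace.comap (ε k) inferInstance) P := by
    have h := indep_iSup_of_disjoint (m := fun i => MeasurableSpace.comap (ε i) inferInstance)
      (fun i => (hεmeas i).comap_le) hεindep.iIndep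
      (S := ↑(Finset.Icc 1 (k-1))) (T := {k}) ?_
    · have e1 : (⨆ i ∈ (↑(Finset.Icc 1 (k-1)) : Set ℕ), MeasurableSpace.comap (ε i) inferInstance)
          = G (k-1) := by rw [hG]; simp
      have e2 : (⨆ i ∈ ({k} : Set ℕ), MeasurableSpace.comap (ε i) inferInstance)
          = MeasurableSpace.comap (ε k) inferInstance := by simp
      rwa [e1, e2] at h
    · simp only [Set.disjoint_singleton_right, Finset.coe_Icc, Set.mem_Icc]
      omega
  -- integrability
  have hDmae : AEStronglyMeasurable D P := (hD.mono hmk).aestronglyMeasurable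
  have hDε_int : Integrable (fun ω => D ω * ε k ω) P := by
    refine Integrable.mono' hDint.norm (hDmae.mul (hεmeas k).aestronglyMeasurable) ?_
    filter_upwards [hae] with ω hω
    rcases hω with h | h <;> simp [h, abs_mul]
  set B := P[fun ω' => D ω' * ε k ω' | G (k-1)] with hBdef
  have hBint : Integrable B P := integrable_condExp
  have hBmeas : StronglyMeasurable[G (k-1)] B := stronglyMeasurable_condExp
  have hBspec : ∀ A : Set Ω, MeasurableSet[G (k-1)] A →
      ∫ ω in A, B ω ∂P = ∫ ω in A, D ω * ε k ω ∂P :=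
    fun A hA => setIntegral_condExp hm' hDε_int hA
  clear_value B
  have hBmae : AEStronglyMeasurable B P := (hBmeas.mono hm').aestronglyMeasurable
  have hBε_int : Integrable (fun ω => B ω * ε k ω) P := by
    refine Integrable.mono' hBint.norm (hBmae.mul (hεmeas k).aestronglyMeasurable) ?_
    filter_upwards [hae] with ω hω
    rcases hω with h | h <;> simp [h, abs_mul]
  -- (c) : key independence computation
  have hkey : ∀ (A : Set Ω), MeasurableSet[G (k-1)] A → ∀ S : Set Ω,
      MeasurableSet[MeasurableSpace.comap (ε k) inferInstance] S → P S = 1/2 →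
      ∫ ω in A ∩ S, B ω ∂P = (1/2) * ∫ ω in A, B ω ∂P := by
    intro A hA S hS hPS
    have hAm : MeasurableSet A := hm' _ hA
    have hSm : MeasurableSet S := hmk _ (hcomap_le _ hS)
    have hfun : (fun ω => B ω * A.indicator (fun _ => (1:ℝ)) ω) * S.indicator (fun _ => (1:ℝ))
        = (A ∩ S).indicator B := by
      funext ω
      simp only [Pi.mul_apply]
      by_cases hωA : ω ∈ A <;> by_cases hωS : ω ∈ S <;>
        simp [Set.indicator, hωA, hωS, Set.mem_inter_iff]
    have hfunA : (fun ω => B ω * A.indicator (fun _ => (1:ℝ)) ω) = A.indicator B := by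
      ext ω; by_cases hωA : ω ∈ A <;> simp [Set.indicator, hωA]
    have hIF : IndepFun (fun ω => B ω * A.indicator (fun _ => (1:ℝ)) ω)
        (S.indicator (fun _ => (1:ℝ))) P := by
      rw [IndepFun_iff_Indep]
      refine indep_mono' hindep ?_ ?_
      · exact Measurable.comap_le (hBmeas.measurable.mul (measurable_const.indicator hA))
      · exact Measurable.comap_le (measurable_const.indicator hS)
    have hintBA : Integrable (fun ω => B ω * A.indicator (fun _ => (1:ℝ)) ω) P := by
      refine Integrable.mono' hBint.norm
        (hBmae.mul (measurable_const.indicator hAm).aestronglyMeasurable) ?_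
      refine Eventually.of_forall fun ω => ?_
      by_cases hωA : ω ∈ A <;> simp [Set.indicator, hωA, abs_nonneg]
    have hintS : Integrable (S.indicator (fun _ => (1:ℝ))) P :=
      (integrable_const (1:ℝ)).indicator hSm
    have := IndepFun.integral_mul_eq_mul_integral hIF hintBA.aestronglyMeasurable hintS.aestronglyMeasurable
    rw [hfun] at this
    rw [hfunA] at this
    rw [integral_indicator (hAm.inter hSm), integral_indicator hAm,
      integral_indicator_const (1:ℝ) hSm] at this
    rw [this, measureReal_def, hPS]
    norm_num [ENNReal.toReal_div]
    ring
  -- (a) : integral of D over G(k-1)-sets vanishes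
  have hintA : ∀ A : Set Ω, MeasurableSet[G (k-1)] A → ∫ ω in A, D ω ∂P = 0 := by
    intro A hA
    rw [← setIntegral_condExp hm' hDint hA]
    rw [setIntegral_congr_ae (hm' _ hA) (hD0.mono fun ω h _ => h)]
    simp
  -- splitting an integral over S1, S2
  have hsplit : ∀ g : Ω → ℝ, Integrable g P → ∀ A : Set Ω, MeasurableSet A →
      ∫ ω in A, g ω ∂P = ∫ ω in A ∩ S1, g ω ∂P + ∫ ω in A ∩ S2, g ω ∂P := by
    intro g hg A hAm
    have hAe : (A : Set Ω) =ᵐ[P] ((A ∩ S1) ∪ (A ∩ S2) : Set Ω) := by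
      rw [Filter.eventuallyEq_set]
      filter_upwards [hae] with ω hω
      simp only [Set.mem_union, Set.mem_inter_iff, hS1def, hS2def, Set.mem_preimage,
        Set.mem_singleton_iff]
      tauto
    rw [setIntegral_congr_set hAe,
      setIntegral_union (show Disjoint (A ∩ S1) (A ∩ S2) from
        hdisj.mono inf_le_right inf_le_right) (hAm.inter hS2m)
        hg.integrableOn hg.integrableOn]
  -- integrals of D over A ∩ S1 and A ∩ S2
  have hDS : ∀ A : Set Ω, MeasurableSet[G (k-1)] A →
      ∫ ω in A ∩ S1, D ω ∂P = (1/2) * ∫ ω in A, B ω ∂P ∧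
      ∫ ω in A ∩ S2, D ω ∂P = -((1/2) * ∫ ω in A, B ω ∂P) := by
    intro A hA
    have hAm : MeasurableSet A := hm' _ hA
    have e0 : ∫ ω in A ∩ S1, D ω ∂P + ∫ ω in A ∩ S2, D ω ∂P = 0 := by
      rw [← hsplit D hDint A hAm]; exact hintA A hA
    have e1 : ∫ ω in A ∩ S1, (D ω * ε k ω) ∂P = ∫ ω in A ∩ S1, D ω ∂P := by
      refine setIntegral_congr_fun (hAm.inter hS1m) fun ω hω => ?_
      rw [show ε k ω = 1 from hω.2, mul_one]
    have e2 : ∫ ω in A ∩ S2, (D ω * ε k ω) ∂P = - ∫ ω in A ∩ S2, D ω ∂P := by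
      rw [← integral_neg]
      refine setIntegral_congr_fun (hAm.inter hS2m) fun ω hω => ?_
      rw [show ε k ω = -1 from hω.2]; ring
    have e3 : ∫ ω in A, B ω ∂P
        = ∫ ω in A ∩ S1, D ω ∂P - ∫ ω in A ∩ S2, D ω ∂P := by
      rw [hBspec A hA, hsplit _ hDε_int A hAm, e1, e2]; ring
    constructor <;> linarith
  -- basic sets of the pi-system
  have hbasic : ∀ A : Set Ω, MeasurableSet[G (k-1)] A →
      ∀ S : Set Ω, MeasurableSet[MeasurableSpace.comap (ε k) inferInstance] S →
      ∫ ω in A ∩ S, B ω * ε k ω ∂P = ∫ ω in A ∩ S, D ω ∂P := by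
    intro A hA S hS
    have hAm : MeasurableSet A := hm' _ hA
    have hSm : MeasurableSet S := hmk _ (hcomap_le _ hS)
    have hBε1 : ∫ ω in A ∩ S1, B ω * ε k ω ∂P = (1/2) * ∫ ω in A, B ω ∂P := by
      have e : ∫ ω in A ∩ S1, B ω * ε k ω ∂P = ∫ ω in A ∩ S1, B ω ∂P :=
        setIntegral_congr_fun (hAm.inter hS1m) fun ω hω => by
          rw [show ε k ω = 1 from hω.2, mul_one]
      rw [e, hkey A hA S1 hS1 hP1]
    have hBε2 : ∫ ω in A ∩ S2, B ω * ε k ω ∂P = -((1/2) * ∫ ω in A, B ω ∂P) := by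
      have e : ∫ ω in A ∩ S2, B ω * ε k ω ∂P = ∫ ω in A ∩ S2, (-(B ω)) ∂P :=
        setIntegral_congr_fun (hAm.inter hS2m) fun ω hω => by
          rw [show ε k ω = -1 from hω.2]; ring
      rw [e, integral_neg, hkey A hA S2 hS2 hP2]
    obtain ⟨hd1, hd2⟩ := hDS A hA
    obtain ⟨S', hS'm, rfl⟩ := hS
    have inter1 : (A ∩ ε k ⁻¹' S') ∩ S1 = A ∩ S1 ∨ (A ∩ ε k ⁻¹' S') ∩ S1 = ∅ := by
      by_cases h1' : (1:ℝ) ∈ S'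
      · left; ext ω
        simp only [Set.mem_inter_iff, Set.mem_preimage, Set.mem_singleton_iff, hS1def]
        constructor
        · rintro ⟨⟨ha, _⟩, he⟩; exact ⟨ha, he⟩
        · rintro ⟨ha, he⟩; exact ⟨⟨ha, by rw [he]; exact h1'⟩, he⟩
      · right; ext ω
        simp only [Set.mem_inter_iff, Set.mem_preimage, Set.mem_singleton_iff, hS1def,
          Set.mem_empty_iff_false, iff_false, not_and]
        rintro ⟨_, hs⟩ he; rw [he] at hs; exact h1' hs
    have inter2 : (A ∩ ε k ⁻¹' S') ∩ S2 = A ∩ S2 ∨ (A ∩ ε k ⁻¹' S') ∩ S2 = ∅ := by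
      by_cases h2' : (-1:ℝ) ∈ S'
      · left; ext ω
        simp only [Set.mem_inter_iff, Set.mem_preimage, Set.mem_singleton_iff, hS2def]
        constructor
        · rintro ⟨⟨ha, _⟩, he⟩; exact ⟨ha, he⟩
        · rintro ⟨ha, he⟩; exact ⟨⟨ha, by rw [he]; exact h2'⟩, he⟩
      · right; ext ω
        simp only [Set.mem_inter_iff, Set.mem_preimage, Set.mem_singleton_iff, hS2def,
          Set.mem_empty_iff_false, iff_false, not_and]
        rintro ⟨_, hs⟩ he; rw [he] at hs; exact h2' hs
    rw [hsplit _ hBε_int _ (hAm.inter hSm), hsplit _ hDint _ (hAm.inter hSm)]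
    rcases inter1 with hI1 | hI1 <;> rcases inter2 with hI2 | hI2 <;>
      rw [hI1, hI2] <;> (try simp only [setIntegral_empty]) <;> linarith
  -- total integrals agree
  have htot : ∫ ω, B ω * ε k ω ∂P = ∫ ω, D ω ∂P := by
    have h := hbasic Set.univ MeasurableSet.univ Set.univ MeasurableSet.univ
    simpa using h
  -- pi-system generating G k
  have hpis : IsPiSystem {t : Set Ω | ∃ A S : Set Ω, MeasurableSet[G (k-1)] A ∧
      MeasurableSet[MeasurableSpace.comap (ε k) inferInstance] S ∧ t = A ∩ S} := by
    rintro t1 ⟨A1, T1, hA1, hT1, rfl⟩ t2 ⟨A2, T2, hA2, hT2, rfl⟩ -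
    refine ⟨A1 ∩ A2, T1 ∩ T2, hA1.inter hA2, hT1.inter hT2, ?_⟩
    ext ω; simp only [Set.mem_inter_iff]; tauto
  have hGksplit : G k = G (k-1) ⊔ MeasurableSpace.comap (ε k) inferInstance := by
    rw [hG k, hG (k-1)]
    have hins : Finset.Icc 1 k = insert k (Finset.Icc 1 (k-1)) := by
      ext i; simp only [Finset.mem_Icc, Finset.mem_insert]; omega
    rw [hins, Finset.iSup_insert]
    exact sup_comm _ _
  have hgen : G k = MeasurableSpace.generateFrom {t : Set Ω | ∃ A S : Set Ω,
      MeasurableSet[G (k-1)] A ∧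
      MeasurableSet[MeasurableSpace.comap (ε k) inferInstance] S ∧ t = A ∩ S} := by
    refine le_antisymm ?_ (MeasurableSpace.generateFrom_le ?_)
    · rw [hGksplit]
      refine sup_le (fun s hs => ?_) (fun s hs => ?_)
      · exact MeasurableSpace.measurableSet_generateFrom
          ⟨s, Set.univ, hs, MeasurableSet.univ, (Set.inter_univ s).symm⟩
      · exact MeasurableSpace.measurableSet_generateFrom
          ⟨Set.univ, s, MeasurableSet.univ, hs, (Set.univ_inter s).symm⟩
    · rintro t ⟨A, S, hA, hS, rfl⟩
      exact (hm'k _ hA).inter (hcomap_le _ hS)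
  -- all G k sets
  have hall : ∀ t : Set Ω, MeasurableSet[G k] t →
      ∫ ω in t, B ω * ε k ω ∂P = ∫ ω in t, D ω ∂P := by
    intro t ht
    refine MeasurableSpace.induction_on_inter (m := G k)
      (C := fun t _ => ∫ ω in t, B ω * ε k ω ∂P = ∫ ω in t, D ω ∂P) hgen hpis ?_ ?_ ?_ ?_ t ht
    · simp
    · rintro t' ⟨A, S, hA, hS, rfl⟩
      exact hbasic A hA S hS
    · intro t' ht' hC
      have e1 := integral_add_compl (hmk _ ht') hBε_int
      have e2 := integral_add_compl (hmk _ ht') hDint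
      linarith
    · intro f hfd hfm hC
      rw [integral_iUnion (fun i => hmk _ (hfm i)) hfd hBε_int.integrableOn,
        integral_iUnion (fun i => hmk _ (hfm i)) hfd hDint.integrableOn]
      exact tsum_congr hC
  -- conclude via uniqueness of conditional expectation
  have hεk : Measurable[G k] (ε k) :=
    (comap_measurable (ε k)).mono hcomap_le le_rfl
  have hBεmeas' : AEStronglyMeasurable[G k] (fun ω => B ω * ε k ω) P :=
    StronglyMeasurable.aestronglyMeasurable
      ((hBmeas.mono hm'k).mul hεk.stronglyMeasurable)
  have hfinal := ae_eq_condExp_of_forall_setIntegral_eq (hGle k) hDint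
      (fun s _ _ => hBε_int.integrableOn) (fun s hs _ => hall s hs) hBεmeas'
  rw [condExp_of_stronglyMeasurable (hGle k) hD hDint] at hfinal
  exact hfinal

theorem representation_wrt_M_off_exception_set
    {Ω : Type*} {m : MeasurableSpace Ω} {P : Measure Ω} [IsProbabilityMeasure P]
    -- `(ε_n)_{n ≥ 1}` is an i.i.d. sequence of Rademacher random variables
    (ε : ℕ → Ω → ℝ) (hεmeas : ∀ n, Measurable (ε n))
    (hεindep : ProbabilityTheory.iIndepFun ε P)
    (hεdist : ∀ n, 1 ≤ n →
      P {ω | ε n ω = 1} = 1 / 2 ∧ P {ω | ε n ω = -1} = 1 / 2)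
    -- the filtration: `F_0` trivial and `F_n = σ(ε_1, …, ε_n)`
    (G : ℕ → MeasurableSpace Ω)
    (hG : ∀ n, G n = ⨆ k ∈ Finset.Icc 1 n, MeasurableSpace.comap (ε k) inferInstance)
    (hGle : ∀ n, G n ≤ m)
    -- the sequence `(x_n)` and the point `x ∉ {x_n : n ≥ 1}`
    (xa : ℕ → ℝ) (x : ℝ) (hx : ∀ n, 1 ≤ n → x ≠ xa n)
    -- the bounded martingale `M_n(x) = Σ_{k=1}^n ((x − x_k)/(2^k (1 + |x_k|))) ε_k`
    (M : ℕ → Ω → ℝ)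
    (hM : ∀ n ω, M n ω = ∑ k ∈ Finset.Icc 1 n, ((x - xa k) / (2 ^ k * (1 + |xa k|))) * ε k ω)
    -- `N` is a martingale with respect to `(F_n)`
    (N : ℕ → Ω → ℝ)
    (hNadapted : ∀ n, StronglyMeasurable[G n] (N n))
    (hNint : ∀ n, Integrable (N n) P)
    (hNmart : ∀ n, P[N (n + 1) | G n] =ᵐ[P] N n) :
    -- `N` is a discrete stochastic integral of `M(x)`
    ∃ γ : ℕ → Ω → ℝ,
      (∀ k, 1 ≤ k → StronglyMeasurable[G (k - 1)] (γ k)) ∧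
      ∀ n, ∀ᵐ ω ∂P,
        N n ω = N 0 ω + ∑ k ∈ Finset.Icc 1 n, γ k ω * (M k ω - M (k - 1) ω) := by
  classical
  have hc : ∀ k : ℕ, 1 ≤ k → (x - xa k) / (2 ^ k * (1 + |xa k|)) ≠ 0 := by
    intro k hk
    have h1 : x - xa k ≠ 0 := sub_ne_zero.mpr (hx k hk)
    have h2 : (2:ℝ) ^ k * (1 + |xa k|) ≠ 0 := by positivity
    exact div_ne_zero h1 h2
  have hGmono : ∀ {i j : ℕ}, i ≤ j → G i ≤ G j := by
    intro i j hij
    rw [hG, hG]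
    exact biSup_mono fun t ht => by simp only [Finset.mem_Icc] at *; omega
  have hMdiff : ∀ k : ℕ, 1 ≤ k → ∀ ω,
      M k ω - M (k-1) ω = ((x - xa k) / (2 ^ k * (1 + |xa k|))) * ε k ω := by
    intro k hk ω
    obtain ⟨j, rfl⟩ : ∃ j, k = j + 1 := ⟨k - 1, (Nat.succ_pred_eq_of_pos hk).symm⟩
    rw [hM, hM]
    simp only [Nat.add_sub_cancel]
    rw [Finset.sum_Icc_succ_top (Nat.le_add_left 1 j)]
    ring
  have hDk : ∀ k : ℕ, 1 ≤ k →
      (fun ω => (P[fun ω' => (N k ω' - N (k-1) ω') * ε k ω' | G (k-1)]) ω * ε k ω)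
        =ᵐ[P] (fun ω => N k ω - N (k-1) ω) := by
    intro k hk
    refine key_rep ε hεmeas hεindep G hG hGle k hk (hεdist k hk).1 (hεdist k hk).2
      (fun ω => N k ω - N (k-1) ω) ?_ ?_ ?_
    · exact (hNadapted k).sub ((hNadapted (k-1)).mono (hGmono (Nat.sub_le k 1)))
    · exact (hNint k).sub (hNint (k-1))
    · have hmart := hNmart (k-1)
      rw [show k - 1 + 1 = k from Nat.succ_pred_eq_of_pos hk] at hmart
      have hsub : P[(fun ω => N k ω - N (k-1) ω) | G (k-1)]
          =ᵐ[P] P[N k | G (k-1)] - P[N (k-1) | G (k-1)] :=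
        condExp_sub (hNint k) (hNint (k-1)) _
      have hNk1 : P[N (k-1) | G (k-1)] = N (k-1) :=
        condExp_of_stronglyMeasurable (hGle _) (hNadapted (k-1)) (hNint (k-1))
      filter_upwards [hsub, hmart] with ω h1 h2
      rw [h1]
      simp only [Pi.sub_apply, hNk1, h2, Pi.zero_apply, sub_self]
  refine ⟨fun k ω => ((x - xa k) / (2 ^ k * (1 + |xa k|)))⁻¹ *
      (P[fun ω' => (N k ω' - N (k-1) ω') * ε k ω' | G (k-1)]) ω, ?_, ?_⟩
  · intro k hk
    exact stronglyMeasurable_condExp.const_mul _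
  · intro n
    have hball : ∀ᵐ ω ∂P, ∀ k ∈ Finset.Icc 1 n,
        (P[fun ω' => (N k ω' - N (k-1) ω') * ε k ω' | G (k-1)]) ω * ε k ω
          = N k ω - N (k-1) ω := by
      rw [Filter.eventually_all_finset]
      intro k hk
      have hk1 : 1 ≤ k := (Finset.mem_Icc.mp hk).1
      filter_upwards [hDk k hk1] with ω hω
      exact hω
    filter_upwards [hball] with ω hω
    have hsum : ∑ k ∈ Finset.Icc 1 n,
        (((x - xa k) / (2 ^ k * (1 + |xa k|)))⁻¹ *
          (P[fun ω' => (N k ω' - N (k-1) ω') * ε k ω' | G (k-1)]) ω)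
          * (M k ω - M (k-1) ω)
        = ∑ k ∈ Finset.Icc 1 n, (N k ω - N (k-1) ω) := by
      refine Finset.sum_congr rfl fun k hk => ?_
      have hk1 : 1 ≤ k := (Finset.mem_Icc.mp hk).1
      rw [hMdiff k hk1 ω, ← hω k hk]
      have hcne := hc k hk1
      set cc := (x - xa k) / (2 ^ k * (1 + |xa k|)) with hccdef
      set b := (P[fun ω' => (N k ω' - N (k-1) ω') * ε k ω' | G (k-1)]) ω
      rw [show (cc⁻¹ * b) * (cc * ε k ω) = (cc⁻¹ * cc) * (b * ε k ω) from by ring,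
        inv_mul_cancel₀ hcne, one_mul]
    have htel : ∀ q : ℕ, ∑ k ∈ Finset.Icc 1 q, (N k ω - N (k-1) ω) = N q ω - N 0 ω := by
      intro q
      induction q with
      | zero => simp
      | succ j ih =>
        rw [Finset.sum_Icc_succ_top (Nat.le_add_left 1 j), ih]
        simp only [Nat.add_sub_cancel]
        ring
    rw [hsum, htel n]
    ring
end
end
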